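/- Let R be real and let t ↦ (x(t),y(t)) be a C² curve with y(t) ∈ (0,π) and x(t) ∈ (R, R + π/2) satisfying the cap geodesic equation ẍ = ẋ²·tan(x−R) − 2ẋẏ·cot y − ẏ²·sin(2(x−R)). If at some time t₀ one has ẋ(t₀) = 0 and ẏ(t₀) ≠ 0, then ẍ(t₀) = −ẏ(t₀)²·sin(2(x(t₀)−R)) < 0. Consequently no geodesic contained in the region x ∈ (R, R+π/2) can be vertical at two distinct times with ẋ > 0 in between; in particular no geodesic loop is contained in the cap. -/

import Mathlib

open Set Real Filter

/-- If `g a = 0` and `g` has negative derivative at `a`, then `g < 0` just to the right. -/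
lemma cap_slope_neg_right {g : ℝ → ℝ} {a c : ℝ} (h : HasDerivAt g c a) (hga : g a = 0)
    (hc : c < 0) : ∀ᶠ t in nhdsWithin a (Set.Ioi a), g t < 0 := by
  have hs := hasDerivAt_iff_tendsto_slope.mp h
  have hev : ∀ᶠ t in nhdsWithin a {a}ᶜ, slope g a t < 0 :=
    hs.eventually (Filter.Tendsto.eventually_lt_const hc tendsto_id)
  have hmono : nhdsWithin a (Set.Ioi a) ≤ nhdsWithin a {a}ᶜ :=
    nhdsWithin_mono a (fun t ht => ne_of_gt ht)
  filter_upwards [hmono hev, self_mem_nhdsWithin] with t ht hta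
  have hta' : 0 < t - a := sub_pos.mpr hta
  rw [slope_def_field, hga, sub_zero] at ht
  rcases div_neg_iff.mp ht with ⟨h1, h2⟩ | ⟨h1, h2⟩
  · linarith
  · exact h1

theorem cap_geodesic_leaves_cap
    (R : ℝ) (x y : ℝ → ℝ)
    (hx : ContDiff ℝ 2 x) (hy : ContDiff ℝ 2 y)
    (hreg : ∀ t, y t ∈ Set.Ioo 0 Real.pi ∧ x t ∈ Set.Ioo R (R + Real.pi / 2))
    (hgeo : ∀ t,
      deriv (deriv x) t =
        (deriv x t) ^ 2 * Real.tan (x t - R)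
          - 2 * deriv x t * deriv y t * Real.cot (y t)
          - (deriv y t) ^ 2 * Real.sin (2 * (x t - R))) :
    (∀ t₀ : ℝ, deriv x t₀ = 0 → deriv y t₀ ≠ 0 →
      deriv (deriv x) t₀ = -(deriv y t₀) ^ 2 * Real.sin (2 * (x t₀ - R)) ∧
      deriv (deriv x) t₀ < 0) ∧
    (¬ ∃ t₁ t₂ : ℝ, t₁ < t₂ ∧
      deriv x t₁ = 0 ∧ deriv y t₁ ≠ 0 ∧
      deriv x t₂ = 0 ∧ deriv y t₂ ≠ 0 ∧
      ∀ t ∈ Set.Ioo t₁ t₂, 0 < deriv x t) ∧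
    (∀ p : ℝ, 0 < p → (∀ t, x (t + p) = x t ∧ y (t + p) = y t) →
      (∀ t, deriv x t ≠ 0 ∨ deriv y t ≠ 0) → False) := by
  -- smoothness facts
  have hx1 : ContDiff ℝ (1 + 1) x := by norm_num; exact hx
  have hdx : ContDiff ℝ 1 (deriv x) := (contDiff_succ_iff_deriv.mp hx1).2.2
  have hdxd : Differentiable ℝ (deriv x) := hdx.differentiable one_ne_zero
  have hxd : Differentiable ℝ x := hx.differentiable (by norm_num)
  -- Part 1
  have P1 : ∀ t₀ : ℝ, deriv x t₀ = 0 → deriv y t₀ ≠ 0 →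
      deriv (deriv x) t₀ = -(deriv y t₀) ^ 2 * Real.sin (2 * (x t₀ - R)) ∧
      deriv (deriv x) t₀ < 0 := by
    intro t₀ hx0 hy0
    obtain ⟨hyI, hxI⟩ := hreg t₀
    have heq : deriv (deriv x) t₀ = -(deriv y t₀) ^ 2 * Real.sin (2 * (x t₀ - R)) := by
      rw [hgeo t₀, hx0]; ring
    have hsin : 0 < Real.sin (2 * (x t₀ - R)) := by
      apply Real.sin_pos_of_pos_of_lt_pi
      · have := hxI.1; linarith
      · have := hxI.2; linarith
    have hsq : 0 < (deriv y t₀) ^ 2 := pow_pos (abs_pos.mpr hy0) 2 |>.trans_le (by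
      rw [sq_abs])
    refine ⟨heq, ?_⟩
    rw [heq]
    nlinarith
  refine ⟨P1, ?_, ?_⟩
  · -- Part 2
    rintro ⟨t₁, t₂, hlt, h1, h1y, _h2, _h2y, hpos⟩
    have hdd : deriv (deriv x) t₁ < 0 := (P1 t₁ h1 h1y).2
    have hder : HasDerivAt (deriv x) (deriv (deriv x) t₁) t₁ :=
      (hdxd t₁).hasDerivAt
    have hev := cap_slope_neg_right hder h1 hdd
    have hmem : ∀ᶠ t in nhdsWithin t₁ (Set.Ioi t₁), t ∈ Set.Ioo t₁ t₂ :=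
      Filter.eventually_of_mem (Ioo_mem_nhdsGT_of_mem ⟨le_refl t₁, hlt⟩) (fun _ h => h)
    obtain ⟨t, hneg, htI⟩ := (hev.and hmem).exists
    exact absurd (hpos t htI) (not_lt.mpr hneg.le)
  · -- Part 3
    intro p hp hper hregder
    have hxper : Function.Periodic x p := fun t => (hper t).1
    obtain ⟨a, haI, hmin⟩ := isCompact_Icc.exists_isMinOn (α := ℝ)
      (nonempty_Icc.mpr hp.le) (hx.continuous.continuousOn (s := Set.Icc 0 p))
    have hglob : ∀ t, x a ≤ x t := by
      intro t
      obtain ⟨s, hsI, hst⟩ := hxper.exists_mem_Ico₀ hp t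
      rw [hst]
      exact hmin (Set.Ico_subset_Icc_self hsI)
    have hlocmin : IsLocalMin x a := by
      apply IsMinOn.isLocalMin (s := Set.univ)
      · intro t _; exact hglob t
      · exact Filter.univ_mem
    have hdx0 : deriv x a = 0 := hlocmin.deriv_eq_zero
    have hdy0 : deriv y a ≠ 0 := (hregder a).resolve_left (by simp [hdx0])
    have hdd : deriv (deriv x) a < 0 := (P1 a hdx0 hdy0).2
    have hev := cap_slope_neg_right (hdxd a).hasDerivAt hdx0 hdd
    obtain ⟨u, hu, hsub⟩ := mem_nhdsGT_iff_exists_Ioo_subset.mp hev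
    set c := (a + u) / 2 with hc
    have hac : a < c := by simp only [hc]; simp only [Set.mem_Ioi] at hu; linarith
    have hcu : c < u := by simp only [hc]; simp only [Set.mem_Ioi] at hu; linarith
    have hanti : StrictAntiOn x (Set.Icc a c) := by
      apply strictAntiOn_of_deriv_neg (convex_Icc a c) (hx.continuous.continuousOn)
      intro t ht
      rw [interior_Icc] at ht
      exact hsub ⟨ht.1, ht.2.trans hcu⟩
    have : x c < x a := hanti ⟨le_refl a, hac.le⟩ ⟨hac.le, le_refl c⟩ hac
    exact absurd (hglob c) (not_le.mpr this)
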